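/- In the quantum protocol for r-ary Hidden Matching: let r ≥ 2, ω = e^{2πi/r}, and let x_0, x_1, ℓ ∈ Z_r with ℓ ≠ x_0 + x_1 (mod r). For the state obtained by the protocol, the probability of measuring outcome m ∈ Z_r is Pr[m] = |r^{-1} ∑_{k even, 0≤k<r} ω^{k(ℓ-m)}|^2 + |r^{-1} ∑_{k odd, 0≤k<r} ω^{k(ℓ-m)}|^2, and this is maximized at m = ℓ, where it equals 1/2 if r is even and 1/2 + 1/(2r²) if r is odd. -/

import Mathlib

lemma card_even_range (n : ℕ) :
    ((Finset.range n).filter (fun k => Even k)).card = (n + 1) / 2 := by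
  induction n with
  | zero => simp
  | succ n ih =>
    rw [Finset.range_add_one, Finset.filter_insert]
    by_cases h : Even n
    · rw [if_pos h, Finset.card_insert_of_notMem (by simp), ih]
      obtain ⟨t, ht⟩ := h; omega
    · rw [if_neg h, ih]
      rw [Nat.not_even_iff] at h; omega

lemma card_odd_range (n : ℕ) :
    ((Finset.range n).filter (fun k => ¬ Even k)).card = n / 2 := by
  have h := Finset.card_filter_add_card_filter_not (s := Finset.range n)
    (p := fun k => Even k)
  simp only [Finset.card_range] at h
  have := card_even_range n
  omega

/-- In the quantum protocol for `r`-ary Hidden Matching with `ℓ ≠ x₀ + x₁`: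
the outcome probability
`Pr[m] = |r⁻¹ ∑_{k even} ω^{k(ℓ-m)}|² + |r⁻¹ ∑_{k odd} ω^{k(ℓ-m)}|²`
is maximized at `m = ℓ`, where it equals `1/2` for even `r` and
`1/2 + 1/(2r²)` for odd `r`. -/
theorem hidden_matching_measurement_prob (r : ℕ) [NeZero r] (hr : 2 ≤ r)
    (x₀ x₁ ℓ : ZMod r) (hℓ : ℓ ≠ x₀ + x₁)
    (P : ZMod r → ℝ)
    (hP : ∀ m : ZMod r, P m =
      ‖(r : ℂ)⁻¹ * ∑ k ∈ (Finset.range r).filter (fun k => Even k),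
          Complex.exp (2 * Real.pi * Complex.I / r) ^ (k * (ℓ - m).val)‖ ^ 2 +
      ‖(r : ℂ)⁻¹ * ∑ k ∈ (Finset.range r).filter (fun k => ¬ Even k),
          Complex.exp (2 * Real.pi * Complex.I / r) ^ (k * (ℓ - m).val)‖ ^ 2) :
    (∀ m : ZMod r, P m ≤ P ℓ) ∧
    P ℓ = (if Even r then (1 : ℝ) / 2 else 1 / 2 + 1 / (2 * (r : ℝ) ^ 2)) := by
  have hr0 : (0 : ℝ) < r := by positivity
  set ω : ℂ := Complex.exp (2 * Real.pi * Complex.I / r) with hωdef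
  have hω : ‖ω‖ = 1 := by
    rw [hωdef, Complex.norm_exp]
    have : (2 * (Real.pi : ℂ) * Complex.I / r).re = 0 := by
      simp [Complex.div_re, Complex.mul_re, Complex.mul_im]
    rw [this, Real.exp_zero]
  have habs : ∀ n : ℕ, ‖ω ^ n‖ = 1 := by
    intro n; rw [norm_pow, hω, one_pow]
  have hrinv : ‖(r : ℂ)⁻¹‖ = (r : ℝ)⁻¹ := by
    rw [norm_inv, Complex.norm_natCast]
  -- value at ℓ
  have hval0 : (ℓ - ℓ).val = 0 := by simp
  have cE := card_even_range r
  have cO := card_odd_range r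
  have hPl : P ℓ = ((((r + 1) / 2 : ℕ) : ℝ) / r) ^ 2 + (((r / 2 : ℕ) : ℝ) / r) ^ 2 := by
    rw [hP ℓ]
    simp only [hval0, Nat.mul_zero, pow_zero, Finset.sum_const, nsmul_eq_mul, mul_one, cE, cO]
    rw [norm_mul, norm_mul, hrinv, Complex.norm_natCast, Complex.norm_natCast]
    ring
  constructor
  · intro m
    rw [hP m, hPl]
    have key : ∀ (s : Finset ℕ),
        ‖(r : ℂ)⁻¹ * ∑ k ∈ s, ω ^ (k * (ℓ - m).val)‖ ≤ (s.card : ℝ) / r := by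
      intro s
      rw [norm_mul, hrinv]
      have h1 : ‖∑ k ∈ s, ω ^ (k * (ℓ - m).val)‖ ≤ (s.card : ℝ) := by
        calc ‖∑ k ∈ s, ω ^ (k * (ℓ - m).val)‖
            ≤ ∑ k ∈ s, ‖ω ^ (k * (ℓ - m).val)‖ := by
              exact norm_sum_le _ _
          _ = (s.card : ℝ) := by simp [habs]
      calc (r : ℝ)⁻¹ * ‖∑ k ∈ s, ω ^ (k * (ℓ - m).val)‖
          ≤ (r : ℝ)⁻¹ * (s.card : ℝ) := by
            apply mul_le_mul_of_nonneg_left h1 (by positivity)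
        _ = (s.card : ℝ) / r := by ring
    have h1 := key ((Finset.range r).filter (fun k => Even k))
    have h2 := key ((Finset.range r).filter (fun k => ¬ Even k))
    rw [cE] at h1; rw [cO] at h2
    have a1 := norm_nonneg ((r : ℂ)⁻¹ * ∑ k ∈ (Finset.range r).filter (fun k => Even k),
          ω ^ (k * (ℓ - m).val))
    have a2 := norm_nonneg ((r : ℂ)⁻¹ * ∑ k ∈ (Finset.range r).filter (fun k => ¬ Even k),
          ω ^ (k * (ℓ - m).val))
    gcongr
  · rw [hPl]
    rcases Nat.even_or_odd r with h | h
    · rw [if_pos h]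
      obtain ⟨t, ht⟩ := h
      have ht0 : 0 < t := by omega
      have h1 : (r + 1) / 2 = t := by omega
      have h2 : r / 2 = t := by omega
      rw [h1, h2, ht]
      have : ((t : ℝ)) ≠ 0 := by positivity
      field_simp
      push_cast; ring
    · rw [if_neg (Nat.not_even_iff_odd.mpr h)]
      obtain ⟨t, ht⟩ := h
      have h1 : (r + 1) / 2 = t + 1 := by omega
      have h2 : r / 2 = t := by omega
      rw [h1, h2, ht]
      have : ((2 * t + 1 : ℕ) : ℝ) ≠ 0 := by positivity
      push_cast
      field_simp
      ring
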